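/- Let 0 < α₁ < β₁ < ⋯ < α_N < β_N and k_i = (α_i - β_i)·∏_{j≠i} (α_j - β_i)/(β_j - β_i). Then 0 < Σ_{i=1}^N (-k_i)/β_i = 1 - ∏_{i=1}^N (α_i/β_i) < 1. -/

import Mathlib

open Finset Polynomial

lemma stmt8_key (N : ℕ) (α β : Fin N → ℝ)
    (hβpos : ∀ i, 0 < β i) (hβinj : Function.Injective β) :
    (∏ i, α i) - ∏ i, β i =
      ∑ i, (∏ j, (α j - β i)) * ∏ j ∈ Finset.univ.erase i, ((β j - β i)⁻¹ * β j) := by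
  set P : ℝ[X] := ∏ i, (X + C (α i)) with hP
  set Q : ℝ[X] := ∏ i, (X + C (β i)) with hQ
  have hPm : P.Monic := monic_prod_of_monic _ _ fun i _ => monic_X_add_C _
  have hQm : Q.Monic := monic_prod_of_monic _ _ fun i _ => monic_X_add_C _
  have hPdeg : P.natDegree = N := by
    rw [hP, natDegree_prod _ _ fun i _ => (monic_X_add_C (α i)).ne_zero]
    simp [natDegree_X_add_C]
  have hQdeg : Q.natDegree = N := by
    rw [hQ, natDegree_prod _ _ fun i _ => (monic_X_add_C (β i)).ne_zero]
    simp [natDegree_X_add_C]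
  have hdeg : (P - Q).degree < (Finset.univ : Finset (Fin N)).card := by
    have hdq : P.degree = Q.degree := by
      rw [Polynomial.degree_eq_natDegree hPm.ne_zero,
        Polynomial.degree_eq_natDegree hQm.ne_zero, hPdeg, hQdeg]
    have hlc : P.leadingCoeff = Q.leadingCoeff := by
      rw [hPm.leadingCoeff, hQm.leadingCoeff]
    have hd := Polynomial.degree_sub_lt hdq hPm.ne_zero hlc
    rw [Polynomial.degree_eq_natDegree hPm.ne_zero, hPdeg] at hd
    simpa using hd
  set v : Fin N → ℝ := fun i => -β i with hv
  have hvinj : Set.InjOn v (Finset.univ : Finset (Fin N)) := by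
    intro i _ j _ h
    exact hβinj (neg_injective h)
  have hinterp := Lagrange.eq_interpolate hvinj hdeg
  have heval := congrArg (Polynomial.eval (0:ℝ)) hinterp
  rw [Lagrange.interpolate_apply, Polynomial.eval_finset_sum] at heval
  have hL : (P - Q).eval 0 = (∏ i, α i) - ∏ i, β i := by
    simp [hP, hQ, Polynomial.eval_prod]
  rw [hL] at heval
  rw [heval]
  refine Finset.sum_congr rfl fun i _ => ?_
  have h1 : (P - Q).eval (v i) = ∏ j, (α j - β i) := by
    have : Q.eval (v i) = 0 := by
      rw [hQ, Polynomial.eval_prod]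
      exact Finset.prod_eq_zero (Finset.mem_univ i) (by simp [hv])
    simp only [Polynomial.eval_sub, this, sub_zero, hP, Polynomial.eval_prod,
      Polynomial.eval_add, Polynomial.eval_X, Polynomial.eval_C, hv]
    rw [show eval (-β i) Q = 0 from this, sub_zero]
    exact Finset.prod_congr rfl fun j _ => by ring
  have h2 : (Lagrange.basis Finset.univ v i).eval 0 =
      ∏ j ∈ Finset.univ.erase i, ((β j - β i)⁻¹ * β j) := by
    rw [Lagrange.basis, Polynomial.eval_prod]
    refine Finset.prod_congr rfl fun j _ => ?_
    simp only [Lagrange.basisDivisor, Polynomial.eval_mul, Polynomial.eval_C,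
      Polynomial.eval_sub, Polynomial.eval_X, hv]
    rw [show -β i - -β j = β j - β i by ring, show (0:ℝ) - -β j = β j by ring]
  rw [Polynomial.eval_mul, Polynomial.eval_C, h1, h2]

/-- With interlacing parameters and the RL partial-fraction coefficients `kᵢ`,
we have `0 < Σ (-kᵢ)/βᵢ = 1 - ∏ αᵢ/βᵢ < 1`. -/
theorem stmt8 (N : ℕ) (hN : 1 ≤ N) (α β : Fin N → ℝ)
    (hpos : ∀ i, 0 < α i)
    (hab : ∀ i, α i < β i)
    (hba : ∀ i j : Fin N, i < j → β i < α j)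
    (k : Fin N → ℝ)
    (hk : ∀ i, k i = (α i - β i) *
      ∏ j ∈ Finset.univ.erase i, (α j - β i) / (β j - β i)) :
    0 < ∑ i, (-(k i)) / β i ∧
      ∑ i, (-(k i)) / β i = 1 - ∏ i, α i / β i ∧
      ∑ i, (-(k i)) / β i < 1 := by
  have hβpos : ∀ i, 0 < β i := fun i => (hpos i).trans (hab i)
  have hmono : StrictMono β := fun i j hij => (hba i j hij).trans (hab j)
  have hβinj : Function.Injective β := hmono.injective
  have hne : (Finset.univ : Finset (Fin N)).Nonempty := by
    have : Nonempty (Fin N) := Fin.pos_iff_nonempty.mp hN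
    exact univ_nonempty
  have hprodβ : 0 < ∏ i, β i := Finset.prod_pos fun i _ => hβpos i
  have key := stmt8_key N α β hβpos hβinj
  -- rewrite each term
  have hterm : ∀ i : Fin N, (∏ j, (α j - β i)) * ∏ j ∈ Finset.univ.erase i, ((β j - β i)⁻¹ * β j)
      = k i * ∏ j ∈ Finset.univ.erase i, β j := by
    intro i
    rw [hk i, ← Finset.mul_prod_erase _ _ (Finset.mem_univ i)]
    rw [Finset.prod_mul_distrib, ← Finset.prod_mul_distrib]
    rw [mul_assoc, mul_assoc]
    congr 1
    rw [← Finset.prod_mul_distrib, ← Finset.prod_mul_distrib]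
    refine Finset.prod_congr rfl fun j _ => ?_
    field_simp
  have hmain : ∑ i, (-(k i)) / β i = 1 - ∏ i, α i / β i := by
    have h1 : (∏ i, α i) - ∏ i, β i = ∑ i, k i * ∏ j ∈ Finset.univ.erase i, β j := by
      rw [key]; exact Finset.sum_congr rfl fun i _ => hterm i
    have h2 : ∑ i, k i / β i = (∏ i, α i) / (∏ i, β i) - 1 := by
      have := congrArg (· / ∏ i, β i) h1
      simp only at this
      rw [sub_div, div_self hprodβ.ne', Finset.sum_div] at this
      rw [this]
      refine Finset.sum_congr rfl fun i _ => ?_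
      rw [← Finset.mul_prod_erase _ _ (Finset.mem_univ i)]
      have h3 : (∏ j ∈ Finset.univ.erase i, β j) ≠ 0 :=
        Finset.prod_ne_zero_iff.mpr fun j _ => (hβpos j).ne'
      rw [div_eq_div_iff (hβpos i).ne' (mul_ne_zero (hβpos i).ne' h3)]
      ring
    have h4 : ∏ i, α i / β i = (∏ i, α i) / (∏ i, β i) := Finset.prod_div_distrib _ _
    rw [h4]
    have : ∑ i, (-(k i)) / β i = -∑ i, k i / β i := by
      rw [← Finset.sum_neg_distrib]
      exact Finset.sum_congr rfl fun i _ => by rw [neg_div]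
    rw [this, h2]; ring
  have hratio : 0 < ∏ i, α i / β i := Finset.prod_pos fun i _ => div_pos (hpos i) (hβpos i)
  have hlt1 : ∏ i, α i / β i < 1 := by
    calc ∏ i, α i / β i < ∏ (_ : Fin N), (1:ℝ) := by
          refine Finset.prod_lt_prod_of_nonempty (fun i _ => div_pos (hpos i) (hβpos i))
            (fun i _ => (div_lt_one (hβpos i)).mpr (hab i)) hne
      _ = 1 := by simp
  refine ⟨?_, hmain, ?_⟩
  · rw [hmain]; linarith
  · rw [hmain]; linarith
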